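/- Let Q be a totally disconnected locally compact Hausdorff space, R = C_c^∞(Q), and φ : M → N a homomorphism of essential R-modules. Then φ is an isomorphism if and only if the localized map φ_x : M/m_x·M → N/m_x·N is an isomorphism for every x ∈ Q (local-to-global principle). In particular, an essential R-module V with V/m_x·V = 0 for all x ∈ Q is zero. -/

import Mathlib

open TensorProduct

theorem HasCompactSupport.add' {Z : Type*} [TopologicalSpace Z] {f g : Z → ℂ}
    (hf : HasCompactSupport f) (hg : HasCompactSupport g) : HasCompactSupport (f + g) :=
  (hf.union hg).of_isClosed_subset isClosed_closure
    ((closure_mono (Function.support_add f g)).trans (le_of_eq closure_union))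

theorem IsLocallyConstant.csmul {Z : Type*} [TopologicalSpace Z] {f : Z → ℂ} (c : ℂ)
    (hf : IsLocallyConstant f) : IsLocallyConstant (c • f) := by
  have : c • f = fun x => c * f x := by funext x; simp
  rw [this]
  exact hf.comp (c * ·)

/-- The space `C_c^∞(Z)` of locally constant compactly supported `ℂ`-valued functions,
as a `ℂ`-submodule of the function space. -/
noncomputable def Cc (Z : Type) [TopologicalSpace Z] : Submodule ℂ (Z → ℂ) where
  carrier := {f | IsLocallyConstant f ∧ HasCompactSupport f}
  add_mem' := fun hf hg => ⟨hf.1.add hg.1, hf.2.add' hg.2⟩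
  zero_mem' := ⟨IsLocallyConstant.const 0, by
    simp only [HasCompactSupport, tsupport]; simpa using isCompact_empty⟩
  smul_mem' := fun c f hf =>
    ⟨IsLocallyConstant.csmul c hf.1, hf.2.mono (Function.support_const_smul_subset c f)⟩

variable (Q : Type) [TopologicalSpace Q]

/-- Pointwise multiplication on `C_c^∞(Q)`. -/
noncomputable def cmul (f g : Cc Q) : Cc Q :=
  ⟨(f : Q → ℂ) * (g : Q → ℂ), ⟨f.2.1.mul g.2.1, f.2.2.mul_right⟩⟩

section Modules

variable {M : Type} [AddCommGroup M] [Module ℂ M]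

/-- The localising submodule `m_x · M` of an `C_c^∞(Q)`-module `(M, ρ)` at a point `x`,
spanned by the elements `ρ(f)(m)` with `f(x) = 0`. -/
noncomputable def mIdealSMul (x : Q) (ρ : Cc Q →ₗ[ℂ] M →ₗ[ℂ] M) : Submodule ℂ M :=
  Submodule.span ℂ {y : M | ∃ (f : Cc Q) (m : M), (f : Q → ℂ) x = 0 ∧ ρ f m = y}

/-- A `C_c^∞(Q)`-module `(M, ρ)` is essential if `C_c^∞(Q)·M = M`, i.e. every element is a
finite sum of elements `ρ(f)(m)`. -/
noncomputable def IsEssentialMod (ρ : Cc Q →ₗ[ℂ] M →ₗ[ℂ] M) : Prop :=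
  ∀ m : M, m ∈ AddSubgroup.closure {y : M | ∃ (f : Cc Q) (m' : M), ρ f m' = y}

end Modules

-- test indCc
noncomputable def indCc (U : Set Q) (h1 : IsClopen U) (h2 : IsCompact U) : Cc Q :=
  ⟨U.indicator 1,
    by
      rw [IsLocallyConstant.iff_exists_open]
      intro x
      by_cases hx : x ∈ U
      · exact ⟨U, h1.2, hx, fun y hy => by
          rw [Set.indicator_of_mem hy, Set.indicator_of_mem hx]; rfl⟩
      · exact ⟨Uᶜ, h1.1.isOpen_compl, hx, fun y hy => by
          rw [Set.indicator_of_notMem hy, Set.indicator_of_notMem hx]⟩,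
    h2.of_isClosed_subset (isClosed_tsupport _)
      (closure_minimal Set.support_indicator_subset h1.1)⟩

theorem indCc_coe (U : Set Q) (h1 : IsClopen U) (h2 : IsCompact U) :
    ((indCc Q U h1 h2 : Cc Q) : Q → ℂ) = U.indicator 1 := rfl
theorem indCc_eq {U V : Set Q} (h : U = V) (h1 : IsClopen U) (h2 : IsCompact U)
    (g1 : IsClopen V) (g2 : IsCompact V) : indCc Q U h1 h2 = indCc Q V g1 g2 := by
  subst h; rfl

theorem indCc_empty : indCc Q ∅ isClopen_empty isCompact_empty = 0 := by
  apply Subtype.ext; funext q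
  show Set.indicator ∅ 1 q = ((0 : Cc Q) : Q → ℂ) q
  simp

theorem cmul_ind_left {U : Set Q} (h1 : IsClopen U) (h2 : IsCompact U) (f : Cc Q)
    (hsupp : Function.support (f : Q → ℂ) ⊆ U) : cmul Q (indCc Q U h1 h2) f = f := by
  apply Subtype.ext; funext q
  show U.indicator 1 q * (f : Q → ℂ) q = (f : Q → ℂ) q
  by_cases hq : q ∈ U
  · rw [Set.indicator_of_mem hq]; simp
  · rw [Set.indicator_of_notMem hq, zero_mul]
    exact (Function.notMem_support.1 fun hq' => hq (hsupp hq')).symm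

theorem cmul_ind_zero {U : Set Q} (h1 : IsClopen U) (h2 : IsCompact U) (f : Cc Q)
    (hvan : ∀ q ∈ U, (f : Q → ℂ) q = 0) : cmul Q (indCc Q U h1 h2) f = 0 := by
  apply Subtype.ext; funext q
  show U.indicator 1 q * (f : Q → ℂ) q = ((0 : Cc Q) : Q → ℂ) q
  by_cases hq : q ∈ U
  · rw [Set.indicator_of_mem hq, hvan q hq, mul_zero]; rfl
  · rw [Set.indicator_of_notMem hq, zero_mul]; rfl

theorem cmul_ind_ind {U V : Set Q} (hU1 : IsClopen U) (hU2 : IsCompact U)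
    (hV1 : IsClopen V) (hV2 : IsCompact V) :
    cmul Q (indCc Q U hU1 hU2) (indCc Q V hV1 hV2)
      = indCc Q (U ∩ V) (hU1.inter hV1) (hU2.inter_right hV1.1) := by
  apply Subtype.ext
  funext q
  have : ((cmul Q (indCc Q U hU1 hU2) (indCc Q V hV1 hV2) : Cc Q) : Q → ℂ) q
      = U.indicator 1 q * V.indicator 1 q := rfl
  rw [this, indCc_coe]
  by_cases hu : q ∈ U <;> by_cases hv : q ∈ V <;>
    simp [Set.indicator_apply, hu, hv]

theorem indCc_union {U V : Set Q} (hU1 : IsClopen U) (hU2 : IsCompact U)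
    (hV1 : IsClopen V) (hV2 : IsCompact V) (hd : ∀ q, q ∈ U → q ∉ V) :
    indCc Q (U ∪ V) (hU1.union hV1) (hU2.union hV2)
      = indCc Q U hU1 hU2 + indCc Q V hV1 hV2 := by
  apply Subtype.ext; funext q
  show (U ∪ V).indicator 1 q
      = (indCc Q U hU1 hU2 + indCc Q V hV1 hV2 : Cc Q).1 q
  have : (indCc Q U hU1 hU2 + indCc Q V hV1 hV2 : Cc Q).1 q
      = U.indicator 1 q + V.indicator 1 q := rfl
  rw [this]
  by_cases hu : q ∈ U
  · rw [Set.indicator_of_mem (Set.mem_union_left _ hu), Set.indicator_of_mem hu,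
      Set.indicator_of_notMem (hd q hu), add_zero]
  · by_cases hv : q ∈ V
    · rw [Set.indicator_of_mem (Set.mem_union_right _ hv), Set.indicator_of_notMem hu,
        Set.indicator_of_mem hv, zero_add]
    · rw [Set.indicator_of_notMem (fun h => h.elim hu hv), Set.indicator_of_notMem hu,
        Set.indicator_of_notMem hv, add_zero]

theorem Cc.support_eq (f : Cc Q) :
    Function.support (f : Q → ℂ) = (f : Q → ℂ) ⁻¹' {0}ᶜ := by
  ext q; simp [Function.mem_support]

theorem Cc.support_isClopen (f : Cc Q) : IsClopen (Function.support (f : Q → ℂ)) := by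
  rw [Cc.support_eq]
  refine ⟨?_, f.2.1 _⟩
  rw [← isOpen_compl_iff, ← Set.preimage_compl, compl_compl]
  exact f.2.1 _

theorem Cc.support_isCompact (f : Cc Q) : IsCompact (Function.support (f : Q → ℂ)) :=
  f.2.2.of_isClosed_subset (Cc.support_isClopen Q f).1 subset_closure


section KeyLemmas

variable {Q : Type} [TopologicalSpace Q] {M : Type} [AddCommGroup M] [Module ℂ M]

theorem rho_ind_inter (ρM : Cc Q →ₗ[ℂ] M →ₗ[ℂ] M)
    (hM : ∀ (f g : Cc Q) (m : M), ρM (cmul Q f g) m = ρM f (ρM g m))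
    {A B : Set Q} (hA1 : IsClopen A) (hA2 : IsCompact A) (hB1 : IsClopen B)
    (hB2 : IsCompact B) (hC1 : IsClopen (A ∩ B)) (hC2 : IsCompact (A ∩ B)) (m : M) :
    ρM (indCc Q (A ∩ B) hC1 hC2) m
      = ρM (indCc Q A hA1 hA2) (ρM (indCc Q B hB1 hB2) m) := by
  rw [← hM, ← cmul_ind_ind Q hA1 hA2 hB1 hB2]

theorem exists_ind_fix (ρM : Cc Q →ₗ[ℂ] M →ₗ[ℂ] M)
    (hM : ∀ (f g : Cc Q) (m : M), ρM (cmul Q f g) m = ρM f (ρM g m))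
    (eM : IsEssentialMod Q ρM) (m : M) :
    ∃ (U : Set Q) (h1 : IsClopen U) (h2 : IsCompact U), ρM (indCc Q U h1 h2) m = m := by
  refine AddSubgroup.closure_induction ?_ ?_ ?_ ?_ (eM m)
  · rintro y ⟨f, m', rfl⟩
    refine ⟨_, Cc.support_isClopen Q f, Cc.support_isCompact Q f, ?_⟩
    rw [← hM, cmul_ind_left]
    exact subset_rfl
  · exact ⟨∅, isClopen_empty, isCompact_empty, map_zero _⟩
  · rintro m1 m2 _ _ ⟨U1, h11, h12, hfix1⟩ ⟨U2, h21, h22, hfix2⟩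
    refine ⟨U1 ∪ U2, h11.union h21, h12.union h22, ?_⟩
    rw [map_add]
    have e1 : ρM (indCc Q (U1 ∪ U2) (h11.union h21) (h12.union h22)) m1 = m1 := by
      conv_lhs => rw [← hfix1]
      rw [← rho_ind_inter ρM hM (h11.union h21) (h12.union h22) h11 h12
        ((h11.union h21).inter h11) ((h12.union h22).inter_right h11.1),
        indCc_eq Q (Set.inter_eq_right.mpr Set.subset_union_left) _ _ h11 h12, hfix1]
    have e2 : ρM (indCc Q (U1 ∪ U2) (h11.union h21) (h12.union h22)) m2 = m2 := by
      conv_lhs => rw [← hfix2]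
      rw [← rho_ind_inter ρM hM (h11.union h21) (h12.union h22) h21 h22
        ((h11.union h21).inter h21) ((h12.union h22).inter_right h21.1),
        indCc_eq Q (Set.inter_eq_right.mpr Set.subset_union_right) _ _ h21 h22, hfix2]
    rw [e1, e2]
  · rintro m1 _ ⟨U, h1, h2, hfix⟩
    exact ⟨U, h1, h2, by rw [map_neg, hfix]⟩

theorem exists_clopen_cpt [T2Space Q] [LocallyCompactSpace Q] [TotallyDisconnectedSpace Q]
    {x : Q} {W : Set Q} (hW : IsOpen W) (hx : x ∈ W) :
    ∃ U : Set Q, IsClopen U ∧ IsCompact U ∧ x ∈ U ∧ U ⊆ W := by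
  obtain ⟨K, hK, hxK, hKW⟩ := exists_compact_subset hW hx
  obtain ⟨V, hVB, hxV, hVsub⟩ := loc_compact_Haus_tot_disc_of_zero_dim.mem_nhds_iff.1
    (isOpen_interior.mem_nhds hxK)
  exact ⟨V, hVB, hK.of_isClosed_subset hVB.1 (hVsub.trans interior_subset),
    hxV, (hVsub.trans interior_subset).trans hKW⟩

theorem loc_vanish [T2Space Q] [LocallyCompactSpace Q] [TotallyDisconnectedSpace Q]
    (ρM : Cc Q →ₗ[ℂ] M →ₗ[ℂ] M)
    (hM : ∀ (f g : Cc Q) (m : M), ρM (cmul Q f g) m = ρM f (ρM g m))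
    (x : Q) {m : M} (hm : m ∈ mIdealSMul Q x ρM) :
    ∃ (U : Set Q) (h1 : IsClopen U) (h2 : IsCompact U),
      x ∈ U ∧ ρM (indCc Q U h1 h2) m = 0 := by
  refine Submodule.span_induction ?_ ?_ ?_ ?_ hm
  · rintro y ⟨f, m', hfx, rfl⟩
    obtain ⟨U, hU, hUc, hxU, hUsub⟩ :=
      exists_clopen_cpt (f.2.1.isOpen_fiber 0) (show x ∈ {q | (f : Q → ℂ) q = 0} from hfx)
    refine ⟨U, hU, hUc, hxU, ?_⟩
    rw [← hM, cmul_ind_zero Q hU hUc f (fun q hq => hUsub hq), map_zero]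
    rfl
  · obtain ⟨U, hU, hUc, hxU, _⟩ := exists_clopen_cpt isOpen_univ (Set.mem_univ x)
    exact ⟨U, hU, hUc, hxU, map_zero _⟩
  · rintro m1 m2 _ _ ⟨U1, h11, h12, hx1, hv1⟩ ⟨U2, h21, h22, hx2, hv2⟩
    refine ⟨U1 ∩ U2, h11.inter h21, h12.inter_right h21.1, ⟨hx1, hx2⟩, ?_⟩
    rw [map_add]
    have e1 : ρM (indCc Q (U1 ∩ U2) (h11.inter h21) (h12.inter_right h21.1)) m1 = 0 := by
      rw [indCc_eq Q (Set.inter_comm U1 U2) _ _ (h21.inter h11) (h22.inter_right h11.1),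
        rho_ind_inter ρM hM h21 h22 h11 h12 _ _, hv1, map_zero]
    have e2 : ρM (indCc Q (U1 ∩ U2) (h11.inter h21) (h12.inter_right h21.1)) m2 = 0 := by
      rw [rho_ind_inter ρM hM h11 h12 h21 h22 _ _, hv2, map_zero]
    rw [e1, e2, add_zero]
  · rintro c m1 _ ⟨U, h1, h2, hxU, hv⟩
    exact ⟨U, h1, h2, hxU, by rw [map_smul, hv, smul_zero]⟩

end KeyLemmas

section CoverLemmas

variable {Q : Type} [TopologicalSpace Q] {M : Type} [AddCommGroup M] [Module ℂ M]

theorem cover_ind (ρM : Cc Q →ₗ[ℂ] M →ₗ[ℂ] M)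
    (hM : ∀ (f g : Cc Q) (m : M), ρM (cmul Q f g) m = ρM f (ρM g m))
    (P : Submodule ℂ M) (hP : ∀ (f : Cc Q) (m : M), m ∈ P → ρM f m ∈ P)
    (U : Q → Set Q) (hU1 : ∀ x, IsClopen (U x)) (hU2 : ∀ x, IsCompact (U x))
    (t : Finset Q) :
    ∀ (m : M) (K : Set Q) (h1 : IsClopen K) (h2 : IsCompact K),
      K ⊆ (⋃ x ∈ t, U x) → ρM (indCc Q K h1 h2) m = m →
      (∀ x : Q, ρM (indCc Q (U x) (hU1 x) (hU2 x)) m ∈ P) → m ∈ P := by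
  classical
  induction t using Finset.induction_on with
  | empty =>
    intro m K h1 h2 hsub hfix _
    have hK : K = ∅ := by simpa using hsub
    subst hK
    rw [← hfix, indCc_empty, map_zero]
    simpa using P.zero_mem
  | @insert a s ha ih =>
    intro m K h1 h2 hsub hfix hall
    have hK1c : IsClopen (K ∩ U a) := h1.inter (hU1 a)
    have hK1cp : IsCompact (K ∩ U a) := h2.inter_right (hU1 a).1
    have hK2c : IsClopen (K \ U a) := h1.diff (hU1 a)
    have hK2cp : IsCompact (K \ U a) := h2.of_isClosed_subset hK2c.1 Set.diff_subset
    have hm : m = ρM (indCc Q (K ∩ U a) hK1c hK1cp) m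
        + ρM (indCc Q (K \ U a) hK2c hK2cp) m := by
      conv_lhs => rw [← hfix]
      rw [indCc_eq Q (Set.inter_union_diff K (U a)).symm h1 h2 (hK1c.union hK2c)
          (hK1cp.union hK2cp),
        indCc_union Q hK1c hK1cp hK2c hK2cp (fun q hq hq2 => hq2.2 hq.2), map_add,
        LinearMap.add_apply]
    have h1P : ρM (indCc Q (K ∩ U a) hK1c hK1cp) m ∈ P := by
      rw [rho_ind_inter ρM hM h1 h2 (hU1 a) (hU2 a) hK1c hK1cp m]
      exact hP _ _ (hall a)
    have h2P : ρM (indCc Q (K \ U a) hK2c hK2cp) m ∈ P := by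
      refine ih _ (K \ U a) hK2c hK2cp ?_ ?_ ?_
      · intro q hq
        have := hsub hq.1
        simp only [Finset.mem_insert, Set.mem_iUnion] at this ⊢
        obtain ⟨i, hi, hqi⟩ := this
        rcases hi with rfl | hi
        · exact absurd hqi hq.2
        · exact ⟨i, hi, hqi⟩
      · rw [← hM, cmul_ind_ind Q hK2c hK2cp hK2c hK2cp,
          indCc_eq Q (Set.inter_self _) _ _ hK2c hK2cp]
      · intro x
        rw [← rho_ind_inter ρM hM (hU1 x) (hU2 x) hK2c hK2cp
            ((hU1 x).inter hK2c) ((hU2 x).inter_right hK2c.1) m,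
          indCc_eq Q (Set.inter_comm (U x) (K \ U a)) _ _ (hK2c.inter (hU1 x))
            (hK2cp.inter_right (hU1 x).1),
          rho_ind_inter ρM hM hK2c hK2cp (hU1 x) (hU2 x) _ _ m]
        exact hP _ _ (hall x)
    rw [hm]
    exact P.add_mem h1P h2P

theorem key_mem (ρM : Cc Q →ₗ[ℂ] M →ₗ[ℂ] M)
    (hM : ∀ (f g : Cc Q) (m : M), ρM (cmul Q f g) m = ρM f (ρM g m))
    (eM : IsEssentialMod Q ρM)
    (P : Submodule ℂ M) (hP : ∀ (f : Cc Q) (m : M), m ∈ P → ρM f m ∈ P) (m : M)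
    (hloc : ∀ x : Q, ∃ (U : Set Q) (h1 : IsClopen U) (h2 : IsCompact U),
      x ∈ U ∧ ρM (indCc Q U h1 h2) m ∈ P) : m ∈ P := by
  obtain ⟨K, hK1, hK2, hfix⟩ := exists_ind_fix ρM hM eM m
  choose U hU1 hU2 hxU hmem using hloc
  have hcov : K ⊆ ⋃ x, U x := fun q _ => Set.mem_iUnion.2 ⟨q, hxU q⟩
  obtain ⟨t, ht⟩ := hK2.elim_finite_subcover U (fun x => (hU1 x).2) hcov
  exact cover_ind ρM hM P hP U hU1 hU2 t m K hK1 hK2 ht hfix hmem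

end CoverLemmas



/-- Local-to-global principle: a homomorphism `φ : M → N` of essential `C_c^∞(Q)`-modules
is an isomorphism if and only if all its localisations `φ_x : M/m_x·M → N/m_x·N` are
isomorphisms; in particular an essential module all of whose localisations vanish is zero. -/
theorem stmt_19 [T2Space Q] [LocallyCompactSpace Q] [TotallyDisconnectedSpace Q]
    (M N : Type) [AddCommGroup M] [Module ℂ M] [AddCommGroup N] [Module ℂ N]
    (ρM : Cc Q →ₗ[ℂ] M →ₗ[ℂ] M) (ρN : Cc Q →ₗ[ℂ] N →ₗ[ℂ] N)
    (hM : ∀ (f g : Cc Q) (m : M), ρM (cmul Q f g) m = ρM f (ρM g m))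
    (hN : ∀ (f g : Cc Q) (m : N), ρN (cmul Q f g) m = ρN f (ρN g m))
    (eM : IsEssentialMod Q ρM) (eN : IsEssentialMod Q ρN)
    (φ : M →ₗ[ℂ] N) (hφ : ∀ (f : Cc Q) (m : M), φ (ρM f m) = ρN f (φ m)) :
    (Function.Bijective φ ↔
      ∀ x : Q, (∀ m : M, φ m ∈ mIdealSMul Q x ρN → m ∈ mIdealSMul Q x ρM) ∧
               (∀ n : N, ∃ m : M, n - φ m ∈ mIdealSMul Q x ρN)) ∧
    ((∀ x : Q, mIdealSMul Q x ρM = ⊤) → ∀ m : M, m = 0) := by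
  have hbot : ∀ (f : Cc Q) (m : M), m ∈ (⊥ : Submodule ℂ M) → ρM f m ∈ (⊥ : Submodule ℂ M) := by
    intro f m hm
    rw [Submodule.mem_bot] at hm ⊢
    rw [hm]
    exact map_zero _
  have hvanish : ∀ m : M, (∀ x : Q, m ∈ mIdealSMul Q x ρM) → m = 0 := by
    intro m hmx
    have : m ∈ (⊥ : Submodule ℂ M) := by
      apply key_mem ρM hM eM ⊥ hbot m
      intro x
      obtain ⟨U, h1, h2, hxU, hv⟩ := loc_vanish ρM hM x (hmx x)
      exact ⟨U, h1, h2, hxU, by rw [hv]; exact Submodule.zero_mem _⟩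
    simpa using this
  constructor
  · constructor
    · intro hbij x
      have hmap : Submodule.map φ (mIdealSMul Q x ρM) = mIdealSMul Q x ρN := by
        unfold mIdealSMul
        rw [Submodule.map_span]
        congr 1
        ext y
        constructor
        · rintro ⟨z, ⟨f, m, hf, rfl⟩, rfl⟩
          exact ⟨f, φ m, hf, (hφ f m).symm⟩
        · rintro ⟨f, n, hf, rfl⟩
          obtain ⟨m, rfl⟩ := hbij.2 n
          exact ⟨ρM f m, ⟨f, m, hf, rfl⟩, hφ f m⟩
      constructor
      · intro m hm
        rw [← hmap, Submodule.mem_map] at hm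
        obtain ⟨m', hm', heq⟩ := hm
        rwa [← hbij.1 heq]
      · intro n
        obtain ⟨m, rfl⟩ := hbij.2 n
        exact ⟨m, by simpa using (mIdealSMul Q x ρN).zero_mem⟩
    · intro h
      have hinj : ∀ m : M, φ m = 0 → m = 0 := by
        intro m hm0
        apply hvanish
        intro x
        exact (h x).1 m (by rw [hm0]; exact (mIdealSMul Q x ρN).zero_mem)
      constructor
      · intro a b hab
        have h0 : φ (a - b) = 0 := by rw [map_sub, hab, sub_self]
        exact sub_eq_zero.1 (hinj _ h0)
      · intro n
        have hmem : n ∈ LinearMap.range φ := by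
          apply key_mem ρN hN eN (LinearMap.range φ) ?_ n ?_
          · rintro f n' ⟨m, rfl⟩
            exact ⟨ρM f m, hφ f m⟩
          · intro x
            obtain ⟨m, hd⟩ := (h x).2 n
            obtain ⟨U, h1, h2, hxU, hv⟩ := loc_vanish ρN hN x hd
            refine ⟨U, h1, h2, hxU, ?_⟩
            rw [map_sub] at hv
            have : ρN (indCc Q U h1 h2) n = φ (ρM (indCc Q U h1 h2) m) := by
              rw [hφ]
              exact sub_eq_zero.1 hv
            rw [this]
            exact ⟨_, rfl⟩
        obtain ⟨m, hm⟩ := hmem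
        exact ⟨m, hm⟩
  · intro hall m
    apply hvanish
    intro x
    rw [hall x]
    trivial
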